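/- The function H(z) = −z·Log z is injective on D_{e^{−1},π}, i.e. on the set {z ∈ ℂ : 0 < |z| < e^{−1} and z ∉ ℝ≤0}. -/

import Mathlib

/-- The domain `D_{s,α} = {z ∈ ℂ : 0 < |z| < s and |Arg z| < α}`. -/
def Ddom (s α : ℝ) : Set ℂ :=
  {z : ℂ | 0 < ‖z‖ ∧ ‖z‖ < s ∧ |Complex.arg z| < α}

open Complex Real

/-- Auxiliary: `w ↦ w - log w` is injective on `Re w > 1` (via a convexity /
positive real part of derivative argument). -/
lemma aux_g_inj {w₁ w₂ : ℂ} (h1 : 1 < w₁.re) (h2 : 1 < w₂.re)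
    (heq : w₁ - Complex.log w₁ = w₂ - Complex.log w₂) : w₁ = w₂ := by
  by_contra hne
  set δ : ℂ := w₁ - w₂ with hδ
  have hδne : δ ≠ 0 := sub_ne_zero.mpr hne
  set φ : ℝ → ℝ := fun t =>
    (((w₂ + (t : ℂ) * δ) - Complex.log (w₂ + (t : ℂ) * δ)) * (starRingEnd ℂ) δ).re with hφ
  have hre : ∀ t ∈ Set.Icc (0:ℝ) 1, 1 < (w₂ + (t : ℂ) * δ).re := by
    intro t ht
    have : (w₂ + (t : ℂ) * δ).re = (1 - t) * w₂.re + t * w₁.re := by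
      simp [hδ, Complex.add_re, Complex.mul_re, Complex.sub_re]; ring
    rw [this]
    rcases eq_or_lt_of_le ht.2 with rfl | hlt
    · nlinarith
    · nlinarith [mul_pos (by linarith : (0:ℝ) < 1 - t) (by linarith : (0:ℝ) < w₂.re - 1),
        mul_nonneg ht.1 (by linarith : (0:ℝ) ≤ w₁.re - 1)]
  have hderiv : ∀ t ∈ Set.Icc (0:ℝ) 1,
      HasDerivAt φ (((1 - (w₂ + (t : ℂ) * δ)⁻¹) * δ * (starRingEnd ℂ) δ).re) t := by
    intro t ht
    have hw := hre t ht
    have hslit : (w₂ + (t : ℂ) * δ) ∈ Complex.slitPlane :=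
      Complex.mem_slitPlane_iff.mpr (Or.inl (by linarith))
    have hγ : HasDerivAt (fun t : ℝ => w₂ + (t : ℂ) * δ) δ t := by
      simpa using ((Complex.ofRealCLM.hasDerivAt (x := t)).mul_const δ).const_add w₂
    have hg : HasDerivAt (fun w : ℂ => w - Complex.log w)
        (1 - (w₂ + (t : ℂ) * δ)⁻¹) (w₂ + (t : ℂ) * δ) :=
      (hasDerivAt_id _).sub (Complex.hasDerivAt_log hslit)
    have hcomp : HasDerivAt (fun t : ℝ =>
        (w₂ + (t : ℂ) * δ) - Complex.log (w₂ + (t : ℂ) * δ))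
        ((1 - (w₂ + (t : ℂ) * δ)⁻¹) * δ) t := by
      have := (hg.hasFDerivAt.restrictScalars ℝ).comp_hasDerivAt t hγ
      simp [smul_eq_mul, mul_comm] at this
      rw [mul_comm (1 - _)]
      exact this
    have hmul := hcomp.mul_const ((starRingEnd ℂ) δ)
    have := Complex.reCLM.hasFDerivAt.comp_hasDerivAt t hmul
    simpa [hφ, Function.comp_def] using this
  have hmono : StrictMonoOn φ (Set.Icc (0:ℝ) 1) := by
    apply strictMonoOn_of_deriv_pos (convex_Icc 0 1)
    · intro t ht
      exact ((hderiv t ht).continuousAt).continuousWithinAt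
    · intro t ht
      rw [interior_Icc] at ht
      have ht' : t ∈ Set.Icc (0:ℝ) 1 := ⟨le_of_lt ht.1, le_of_lt ht.2⟩
      rw [(hderiv t ht').deriv]
      have hw := hre t ht'
      set w := w₂ + (t : ℂ) * δ
      have hns : w.re < Complex.normSq w := by
        have : w.re ^ 2 ≤ Complex.normSq w := by
          rw [Complex.normSq_apply]; nlinarith [sq_nonneg w.im]
        nlinarith
      have h1 : ((1 - w⁻¹) * δ * (starRingEnd ℂ) δ).re
          = (1 - w.re / Complex.normSq w) * Complex.normSq δ := by
        rw [mul_assoc, Complex.mul_conj]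
        rw [show ((Complex.normSq δ : ℝ) : ℂ) = ((Complex.normSq δ : ℝ) : ℂ) from rfl]
        rw [Complex.mul_re]
        simp [Complex.inv_re, Complex.inv_im]
      rw [h1]
      have hnsw : 0 < Complex.normSq w := by
        have := Complex.normSq_nonneg w; nlinarith
      have hδpos : 0 < Complex.normSq δ := Complex.normSq_pos.mpr hδne
      have : w.re / Complex.normSq w < 1 := by
        rw [div_lt_one hnsw]; exact hns
      nlinarith
  have h01 : φ 0 < φ 1 :=
    hmono (Set.left_mem_Icc.mpr zero_le_one) (Set.right_mem_Icc.mpr zero_le_one) zero_lt_one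
  have e0 : w₂ + ((0 : ℝ) : ℂ) * δ = w₂ := by simp
  have e1 : w₂ + ((1 : ℝ) : ℂ) * δ = w₁ := by simp [hδ]
  have hφ0 : φ 0 = ((w₂ - Complex.log w₂) * (starRingEnd ℂ) δ).re := by
    simp only [hφ]; rw [e0]
  have hφ1 : φ 1 = ((w₁ - Complex.log w₁) * (starRingEnd ℂ) δ).re := by
    simp only [hφ]; rw [e1]
  rw [hφ0, hφ1, heq] at h01
  exact lt_irrefl _ h01

/-- Auxiliary: `w ↦ w * exp (-w)` is injective on the region
`Re w > 1`, `|Im w| < π`. -/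
lemma aux_f_inj {w₁ w₂ : ℂ} (h1 : 1 < w₁.re) (h2 : 1 < w₂.re)
    (hy1 : |w₁.im| < Real.pi) (hy2 : |w₂.im| < Real.pi)
    (heq : w₁ * Complex.exp (-w₁) = w₂ * Complex.exp (-w₂)) : w₁ = w₂ := by
  have hw1ne : w₁ ≠ 0 := fun h => by simp [h] at h1; linarith
  have hw2ne : w₂ ≠ 0 := fun h => by simp [h] at h2; linarith
  have hpi : (0:ℝ) < Real.pi := Real.pi_pos
  -- exp (log w₁ - log w₂ - (w₁ - w₂)) = 1
  have hexp1 : Complex.exp (Complex.log w₁ - Complex.log w₂ - (w₁ - w₂)) = 1 := by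
    have e1 : Complex.exp (Complex.log w₁ - Complex.log w₂ - (w₁ - w₂))
        = (w₁ * Complex.exp (-w₁)) * (w₂ * Complex.exp (-w₂))⁻¹ := by
      rw [show Complex.log w₁ - Complex.log w₂ - (w₁ - w₂)
          = (Complex.log w₁ + -w₁) - (Complex.log w₂ + -w₂) by ring]
      rw [Complex.exp_sub, Complex.exp_add, Complex.exp_add,
        Complex.exp_log hw1ne, Complex.exp_log hw2ne, div_eq_mul_inv]
    rw [e1, heq, mul_inv_cancel₀ (mul_ne_zero hw2ne (Complex.exp_ne_zero _))]
  obtain ⟨n, hn⟩ := Complex.exp_eq_one_iff.mp hexp1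
  -- imaginary parts
  have hIm : Complex.arg w₁ - Complex.arg w₂ - (w₁.im - w₂.im) = n * (2 * Real.pi) := by
    have := congrArg Complex.im hn
    simpa [Complex.sub_im, Complex.log_im, Complex.mul_im, Complex.mul_re] using this
  have ha1 : |Complex.arg w₁| < Real.pi / 2 :=
    Complex.abs_arg_lt_pi_div_two_iff.mpr (Or.inl (by linarith))
  have ha2 : |Complex.arg w₂| < Real.pi / 2 :=
    Complex.abs_arg_lt_pi_div_two_iff.mpr (Or.inl (by linarith))
  obtain ⟨ha1l, ha1r⟩ := abs_lt.mp ha1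
  obtain ⟨ha2l, ha2r⟩ := abs_lt.mp ha2
  obtain ⟨hy1l, hy1r⟩ := abs_lt.mp hy1
  obtain ⟨hy2l, hy2r⟩ := abs_lt.mp hy2
  have hlow : -(3 * Real.pi) < (n : ℝ) * (2 * Real.pi) := by rw [← hIm]; linarith
  have hhigh : (n : ℝ) * (2 * Real.pi) < 3 * Real.pi := by rw [← hIm]; linarith
  have hnlt : n < 2 := by exact_mod_cast show (n : ℝ) < 2 by nlinarith
  have hngt : -2 < n := by exact_mod_cast show (-2 : ℝ) < (n : ℝ) by nlinarith
  interval_cases n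
  · -- n = -1 : contradiction
    exfalso
    push_cast at hIm
    have hyd : Real.pi < w₁.im - w₂.im := by linarith
    have ht2 : Complex.arg w₂ < 0 := Complex.arg_neg_iff.mpr (by linarith)
    have ht1 : 0 ≤ Complex.arg w₁ := Complex.arg_nonneg_iff.mpr (by linarith)
    linarith
  · -- n = 0 : use injectivity of w - log w
    push_cast at hn
    simp only [zero_mul] at hn
    have hg : w₁ - Complex.log w₁ = w₂ - Complex.log w₂ := by linear_combination -hn
    exact aux_g_inj h1 h2 hg
  · -- n = 1 : contradiction
    exfalso
    push_cast at hIm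
    have hyd : w₁.im - w₂.im < -Real.pi := by linarith
    have ht1 : Complex.arg w₁ < 0 := Complex.arg_neg_iff.mpr (by linarith)
    have ht2 : 0 ≤ Complex.arg w₂ := Complex.arg_nonneg_iff.mpr (by linarith)
    linarith

/-- The function `H(z) = −z·Log z` is injective on `D_{e⁻¹, π}`. -/
theorem stmt_2 :
    Set.InjOn (fun z : ℂ => -z * Complex.log z) (Ddom (Real.exp (-1)) Real.pi) := by
  intro z₁ hz₁ z₂ hz₂ heq
  obtain ⟨ha1, hb1, hc1⟩ := hz₁
  obtain ⟨ha2, hb2, hc2⟩ := hz₂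
  have hz1ne : z₁ ≠ 0 := by simpa using norm_pos_iff.mp ha1
  have hz2ne : z₂ ≠ 0 := by simpa using norm_pos_iff.mp ha2
  set w₁ : ℂ := -Complex.log z₁ with hw₁
  set w₂ : ℂ := -Complex.log z₂ with hw₂
  have hre1 : 1 < w₁.re := by
    have : Real.log ‖z₁‖ < -1 := (Real.log_lt_iff_lt_exp ha1).mpr (by simpa using hb1)
    simp [hw₁, Complex.log_re]
    linarith
  have hre2 : 1 < w₂.re := by
    have : Real.log ‖z₂‖ < -1 := (Real.log_lt_iff_lt_exp ha2).mpr (by simpa using hb2)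
    simp [hw₂, Complex.log_re]
    linarith
  have him1 : |w₁.im| < Real.pi := by
    simpa [hw₁, Complex.log_im, abs_neg] using hc1
  have him2 : |w₂.im| < Real.pi := by
    simpa [hw₂, Complex.log_im, abs_neg] using hc2
  have hE1 : Complex.exp (-w₁) = z₁ := by rw [hw₁, neg_neg, Complex.exp_log hz1ne]
  have hE2 : Complex.exp (-w₂) = z₂ := by rw [hw₂, neg_neg, Complex.exp_log hz2ne]
  have heq' : w₁ * Complex.exp (-w₁) = w₂ * Complex.exp (-w₂) := by
    rw [hE1, hE2, hw₁, hw₂]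
    simpa [neg_mul, mul_comm] using heq
  have hw : w₁ = w₂ := aux_f_inj hre1 hre2 him1 him2 heq'
  calc z₁ = Complex.exp (-w₁) := hE1.symm
    _ = Complex.exp (-w₂) := by rw [hw]
    _ = z₂ := hE2
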